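/- arXiv:2401.06662 — 4 statements merged into one kernel-verified Lean document; each statement's English description precedes it below -/
import Mathlib

section
/- A word w is sortable by a stack of depth k if and only if w avoids the pattern 120 and the strictly decreasing pattern k(k-1)...10 of length k+1. -/
def Contains120 (w : List ℕ) : Prop :=
  ∃ i j k, i < j ∧ j < k ∧ k < w.length ∧ w.getD k 0 < w.getD i 0 ∧ w.getD i 0 < w.getD j 0

def Contains201 (w : List ℕ) : Prop :=
  ∃ i j k, i < j ∧ j < k ∧ k < w.length ∧ w.getD j 0 < w.getD k 0 ∧ w.getD k 0 < w.getD i 0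

def Contains210 (w : List ℕ) : Prop :=
  ∃ i j k, i < j ∧ j < k ∧ k < w.length ∧ w.getD k 0 < w.getD j 0 ∧ w.getD j 0 < w.getD i 0

def Contains1010 (w : List ℕ) : Prop :=
  ∃ i j k l, i < j ∧ j < k ∧ k < l ∧ l < w.length ∧
    w.getD j 0 = w.getD l 0 ∧ w.getD l 0 < w.getD i 0 ∧ w.getD i 0 = w.getD k 0

/-- w has a strictly decreasing subsequence of length m, i.e. contains the pattern
(m-1)(m-2)...10. -/
def ContainsDec (m : ℕ) (w : List ℕ) : Prop :=
  ∃ s : Fin m → ℕ, StrictMono s ∧ (∀ a, s a < w.length) ∧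
    ∀ a b : Fin m, a < b → w.getD (s b) 0 < w.getD (s a) 0

/-- One step of a stack of depth k, acting on states (input, stack, output): one may push
the next input letter on top of the stack provided the stack stays weakly decreasing from
the top and contains at most k distinct values, or pop the top entry to the output. -/
inductive StackStep (k : ℕ) : List ℕ × List ℕ × List ℕ → List ℕ × List ℕ × List ℕ → Prop
  | push (x : ℕ) (xs st out : List ℕ) :
      (st = [] ∨ x ≤ st.headI) → (x :: st).dedup.length ≤ k →
      StackStep k (x :: xs, st, out) (xs, x :: st, out)
  | pop (xs : List ℕ) (t : ℕ) (st out : List ℕ) :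
      StackStep k (xs, t :: st, out) (xs, st, out ++ [t])

/-- w is sortable by a stack of depth k: some sequence of legal operations consumes the
input and produces a weakly increasing output. -/
def StackSortableDepth (k : ℕ) (w : List ℕ) : Prop :=
  ∃ out : List ℕ, Relation.ReflTransGen (StackStep k) (w, [], []) ([], [], out) ∧
    List.Pairwise (· ≤ ·) out

lemma getD_get (l : List ℕ) (i : Fin l.length) : l.getD (i : ℕ) 0 = l.get i := by
  rw [List.getD_eq_getElem l 0 i.isLt]; rfl

lemma contains120_mono {l l' : List ℕ} (h : l.Sublist l') : Contains120 l → Contains120 l' := by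
  rintro ⟨i, j, m, hij, hjm, hm, h1, h2⟩
  obtain ⟨f, hf⟩ := List.sublist_iff_exists_fin_orderEmbedding_get_eq.mp h
  have hi : i < l.length := lt_trans (lt_trans hij hjm) hm
  have hj : j < l.length := lt_trans hjm hm
  refine ⟨f ⟨i, hi⟩, f ⟨j, hj⟩, f ⟨m, hm⟩, ?_, ?_, (f ⟨m, hm⟩).isLt, ?_, ?_⟩
  · exact f.strictMono (by exact hij)
  · exact f.strictMono (by exact hjm)
  · rw [getD_get l' (f ⟨m, hm⟩), getD_get l' (f ⟨i, hi⟩), ← hf, ← hf]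
    rwa [getD_get l ⟨m, hm⟩, getD_get l ⟨i, hi⟩] at h1
  · rw [getD_get l' (f ⟨i, hi⟩), getD_get l' (f ⟨j, hj⟩), ← hf, ← hf]
    rwa [getD_get l ⟨i, hi⟩, getD_get l ⟨j, hj⟩] at h2

lemma containsDec_mono {m : ℕ} {l l' : List ℕ} (h : l.Sublist l') :
    ContainsDec m l → ContainsDec m l' := by
  rintro ⟨s, hs, hlt, hval⟩
  obtain ⟨f, hf⟩ := List.sublist_iff_exists_fin_orderEmbedding_get_eq.mp h
  refine ⟨fun a => f ⟨s a, hlt a⟩, ?_, fun a => (f _).isLt, ?_⟩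
  · intro a b hab
    exact f.strictMono (by exact hs hab)
  · intro a b hab
    rw [getD_get l' (f ⟨s b, hlt b⟩), getD_get l' (f ⟨s a, hlt a⟩), ← hf, ← hf]
    have := hval a b hab
    rwa [getD_get l ⟨s b, hlt b⟩, getD_get l ⟨s a, hlt a⟩] at this

lemma dec_of_pairwise_sublist {d l : List ℕ} (h : d.Sublist l) (hp : d.Pairwise (· > ·)) :
    ContainsDec d.length l := by
  obtain ⟨f, hf⟩ := List.sublist_iff_exists_fin_orderEmbedding_get_eq.mp h
  refine ⟨fun a => f a, fun a b hab => f.strictMono hab, fun a => (f a).isLt, ?_⟩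
  intro a b hab
  rw [getD_get l (f b), getD_get l (f a), ← hf, ← hf]
  exact List.pairwise_iff_get.mp hp a b hab

lemma c120_of_sublist {a b c : ℕ} {l : List ℕ} (h : [a, b, c].Sublist l)
    (h1 : c < a) (h2 : a < b) : Contains120 l := by
  have := contains120_mono h (l := [a, b, c]) ⟨0, 1, 2, by omega, by omega, by simp, by simpa, by simpa⟩
  exact this

lemma pop_all (k : ℕ) (st : List ℕ) : ∀ o, Relation.ReflTransGen (StackStep k) ([], st, o) ([], [], o ++ st) := by
  induction st with
  | nil => intro o; simpa using Relation.ReflTransGen.refl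
  | cons t st ih =>
    intro o
    refine Relation.ReflTransGen.head (StackStep.pop [] t st o) ?_
    simpa using ih (o ++ [t])

lemma headI_le_of_sorted {l : List ℕ} (hs : l.Pairwise (· ≤ ·)) {a : ℕ} (ha : a ∈ l) :
    l.headI ≤ a := by
  cases l with
  | nil => simp at ha
  | cons x l =>
    rcases List.mem_cons.mp ha with rfl | h
    · simp
    · exact (List.pairwise_cons.mp hs).1 a h

lemma greedy_lemma (k : ℕ) : ∀ N xs st o, 2 * xs.length + st.length ≤ N →
    st.Pairwise (· ≤ ·) → o.Pairwise (· ≤ ·) →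
    (∀ a ∈ o, ∀ b : ℕ, (b ∈ xs ∨ b ∈ st) → a ≤ b) →
    ¬ Contains120 (st.reverse ++ xs) → ¬ ContainsDec (k + 1) (st.reverse ++ xs) →
    ∃ out : List ℕ, Relation.ReflTransGen (StackStep k) (xs, st, o) ([], [], out) ∧
      out.Pairwise (· ≤ ·) := by
  intro N
  induction N with
  | zero =>
    intro xs st o hN hst ho hcross _ _
    have hxs : xs = [] := by cases xs <;> simp_all <;> omega
    have hst' : st = [] := by cases st <;> simp_all
    subst hxs hst'
    exact ⟨o, Relation.ReflTransGen.refl, ho⟩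
  | succ N ih =>
    intro xs st o hN hst ho hcross h120 hdec
    cases xs with
    | nil =>
      refine ⟨o ++ st, pop_all k st o, ?_⟩
      rw [List.pairwise_append]
      exact ⟨ho, hst, fun a ha b hb => hcross a ha b (Or.inr hb)⟩
    | cons x xs =>
      by_cases hx : st = [] ∨ x ≤ st.headI
      · -- push
        have hsort : (x :: st).Pairwise (· ≤ ·) := by
          rw [List.pairwise_cons]
          refine ⟨fun b hb => le_trans ?_ (headI_le_of_sorted hst hb), hst⟩
          rcases hx with h | h
          · simp [h] at hb
          · exact h
        -- depth bound
        have hdepth : (x :: st).dedup.length ≤ k := by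
          by_contra hgt
          push_neg at hgt
          set L : List ℕ := st.reverse ++ [x] with hL
          have hLsub : L.Sublist (st.reverse ++ x :: xs) := by
            exact (List.Sublist.refl st.reverse).append (by simp)
          have hLpair : L.Pairwise (· ≥ ·) := by
            rw [hL, List.pairwise_append]
            refine ⟨?_, by simp, ?_⟩
            · rw [List.pairwise_reverse]
              exact hst
            · intro a ha b hb
              simp at hb; subst hb
              rcases hx with h | h
              · rw [h] at ha; simp at ha
              · exact le_trans h (headI_le_of_sorted hst (by simpa using ha))
          have hdd : L.dedup.Pairwise (· > ·) := by
            have h1 : L.dedup.Pairwise (· ≥ ·) := hLpair.sublist (List.dedup_sublist L)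
            have h2 : L.dedup.Pairwise (· ≠ ·) := L.nodup_dedup
            exact (h1.and h2).imp (fun h => lt_of_le_of_ne h.1 (Ne.symm h.2))
          have hlen : L.dedup.length = (x :: st).dedup.length := by
            rw [← List.card_toFinset, ← List.card_toFinset]
            congr 1
            ext a
            simp [hL, or_comm]
          set d := L.dedup.take (k+1) with hd
          have hdsub : d.Sublist (st.reverse ++ x :: xs) :=
            ((List.take_sublist (k+1) L.dedup).trans (List.dedup_sublist L)).trans hLsub
          have hdlen : d.length = k + 1 := by
            rw [hd, List.length_take]
            omega
          have := dec_of_pairwise_sublist hdsub (hdd.sublist (List.take_sublist _ _))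
          rw [hdlen] at this
          exact hdec this
        have heq : (x :: st).reverse ++ xs = st.reverse ++ x :: xs := by simp
        have hcross' : ∀ a ∈ o, ∀ b : ℕ, (b ∈ xs ∨ b ∈ x :: st) → a ≤ b := by
          intro a ha b hb
          rcases hb with hb | hb
          · exact hcross a ha b (Or.inl (by simp [hb]))
          · rcases List.mem_cons.mp hb with rfl | hb
            · exact hcross a ha b (Or.inl (by simp))
            · exact hcross a ha b (Or.inr hb)
        obtain ⟨out, tr, hs⟩ := ih xs (x :: st) o (by simp at hN ⊢; omega) hsort ho hcross'
          (by rw [heq]; exact h120) (by rw [heq]; exact hdec)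
        exact ⟨out, Relation.ReflTransGen.head (StackStep.push x xs st o hx hdepth) tr, hs⟩
      · -- pop
        push_neg at hx
        obtain ⟨hne, hlt⟩ := hx
        cases st with
        | nil => simp at hne
        | cons t st =>
          simp at hlt
          have hsub : (st.reverse ++ x :: xs).Sublist ((t :: st).reverse ++ x :: xs) := by
            simp only [List.reverse_cons]
            exact List.Sublist.append (by simp) (List.Sublist.refl _)
          have hsorto : (o ++ [t]).Pairwise (· ≤ ·) := by
            rw [List.pairwise_append]
            exact ⟨ho, by simp, fun a ha b hb => by
              simp at hb; rw [hb]; exact hcross a ha t (Or.inr (by simp))⟩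
          have hcross' : ∀ a ∈ o ++ [t], ∀ b : ℕ, (b ∈ x :: xs ∨ b ∈ st) → a ≤ b := by
            intro a ha b hb
            rcases List.mem_append.mp ha with ha | ha
            · rcases hb with hb | hb
              · exact hcross a ha b (Or.inl hb)
              · exact hcross a ha b (Or.inr (List.mem_cons_of_mem t hb))
            · simp at ha; rw [ha]
              rcases hb with hb | hb
              · rcases List.mem_cons.mp hb with rfl | hb
                · exact le_of_lt hlt
                · by_contra hab
                  push_neg at hab
                  apply h120
                  refine c120_of_sublist (a := t) (b := x) (c := b) ?_ hab hlt
                  have h1 : [t].Sublist ((t :: st).reverse) := by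
                    rw [List.singleton_sublist]; simp
                  have h2 : [x, b].Sublist (x :: xs) :=
                    List.cons_sublist_cons.mpr (List.singleton_sublist.mpr hb)
                  simpa using h1.append h2
              · exact (List.pairwise_cons.mp hst).1 b hb
          obtain ⟨out, tr, hs⟩ := ih (x :: xs) st (o ++ [t]) (by simp at hN ⊢; omega)
            ((List.pairwise_cons.mp hst).2) hsorto hcross'
            (fun hc => h120 (contains120_mono hsub hc)) (fun hc => hdec (containsDec_mono hsub hc))
          exact ⟨out, Relation.ReflTransGen.head (StackStep.pop (x :: xs) t st o) tr, hs⟩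

section Necessity

variable {k : ℕ}

abbrev SState := List ℕ × List ℕ × List ℕ

lemma multiset_inv {a b : SState} (h : Relation.ReflTransGen (StackStep k) a b) :
    (↑a.1 + ↑a.2.1 + ↑a.2.2 : Multiset ℕ) = ↑b.1 + ↑b.2.1 + ↑b.2.2 := by
  induction h with
  | refl => rfl
  | tail h' hstep ih =>
    rw [ih]
    cases hstep with
    | push x xs st out h1 h2 => simp; exact List.perm_middle.symm
    | pop xs t st out =>
      simp
      refine List.Perm.append_left xs ?_
      simpa using (List.perm_append_singleton t (st ++ out)).symm

lemma sorted_inv {a b : SState} (h : Relation.ReflTransGen (StackStep k) a b)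
    (ha : a.2.1.Pairwise (· ≤ ·)) : b.2.1.Pairwise (· ≤ ·) := by
  induction h with
  | refl => exact ha
  | tail h' hstep ih =>
    cases hstep with
    | push x xs st out h1 h2 =>
      simp only
      rw [List.pairwise_cons]
      refine ⟨fun b hb => le_trans ?_ (headI_le_of_sorted ih hb), ih⟩
      rcases h1 with h | h
      · simp [h] at hb
      · exact h
    | pop xs t st out => exact (List.pairwise_cons.mp ih).2

lemma prefix_inv {a b : SState} (h : Relation.ReflTransGen (StackStep k) a b) :
    a.2.2 <+: b.2.2 := by
  induction h with
  | refl => exact List.prefix_refl _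
  | tail h' hstep ih =>
    cases hstep with
    | push x xs st out h1 h2 => exact ih
    | pop xs t st out => exact ih.trans (List.prefix_append _ _)

lemma find_push {out : List ℕ} :
    ∀ (a : SState), Relation.ReflTransGen (StackStep k) a ([], [], out) →
    ∀ xs st o, a = (xs, st, o) → xs ≠ [] →
    ∃ st' o', Relation.ReflTransGen (StackStep k) a (xs, st', o') ∧
      (st' = [] ∨ xs.headI ≤ st'.headI) ∧ (xs.headI :: st').dedup.length ≤ k ∧
      Relation.ReflTransGen (StackStep k) (xs.tail, xs.headI :: st', o') ([], [], out) := by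
  intro a h
  induction h using Relation.ReflTransGen.head_induction_on with
  | refl => intro xs st o ha hne; rw [Prod.mk.injEq] at ha; exact absurd ha.1.symm hne
  | head hstep htail ih =>
    intro xs st o ha hne
    subst ha
    cases hstep with
    | push x xs1 st1 o1 h1 h2 =>
      exact ⟨st, o, Relation.ReflTransGen.refl, by simpa using h1, by simpa using h2,
        by simpa using htail⟩
    | pop xs1 t st1 o1 =>
      obtain ⟨st', o', tr, hc1, hc2, tr2⟩ := ih xs st1 (o ++ [t]) rfl hne
      exact ⟨st', o', Relation.ReflTransGen.head (StackStep.pop xs t st1 o) tr, hc1, hc2, tr2⟩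

lemma reach_drop {w out : List ℕ}
    (h : Relation.ReflTransGen (StackStep k) (w, [], []) ([], [], out)) :
    ∀ m, m ≤ w.length → ∃ st o,
      Relation.ReflTransGen (StackStep k) (w, [], []) (w.drop m, st, o) ∧
      Relation.ReflTransGen (StackStep k) (w.drop m, st, o) ([], [], out) := by
  intro m
  induction m with
  | zero => intro _; exact ⟨[], [], by simpa using Relation.ReflTransGen.refl, by simpa using h⟩
  | succ m ih =>
    intro hm
    obtain ⟨st, o, tr1, tr2⟩ := ih (by omega)
    have hne : w.drop m ≠ [] := by
      intro hc
      rw [List.drop_eq_nil_iff] at hc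
      omega
    obtain ⟨st', o', tra, hc1, hc2, trb⟩ := find_push _ tr2 (w.drop m) st o rfl hne
    have hdm : w.drop m = w[m] :: w.drop (m+1) := List.drop_eq_getElem_cons (by omega)
    have hhead : (w.drop m).headI = w[m] := by rw [hdm]; rfl
    have htail : (w.drop m).tail = w.drop (m+1) := by rw [hdm]; rfl
    refine ⟨w[m] :: st', o', ?_, ?_⟩
    · refine (tr1.trans tra).trans (Relation.ReflTransGen.single ?_)
      rw [hdm] at tra ⊢
      have := StackStep.push (k := k) w[m] (w.drop (m+1)) st' o' (by rwa [hhead] at hc1)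
        (by rwa [hhead] at hc2)
      exact this
    · rw [htail, hhead] at trb; exact trb

end Necessity

lemma sorted_cross {o R : List ℕ} (h : (o ++ R).Pairwise (· ≤ ·)) {a b : ℕ}
    (ha : a ∈ o) (hb : b ∈ R) : a ≤ b :=
  (List.pairwise_append.mp h).2.2 a ha b hb

lemma moment {k : ℕ} {w out : List ℕ}
    (h : Relation.ReflTransGen (StackStep k) (w, [], []) ([], [], out))
    {m : ℕ} (hm : m < w.length) :
    ∃ st o R : List ℕ, st.Pairwise (· ≤ ·) ∧
      (st = [] ∨ w[m] ≤ st.headI) ∧ ((w[m] :: st).dedup.length ≤ k) ∧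
      (↑st + ↑o : Multiset ℕ) = ↑(w.take m) ∧
      out = o ++ R ∧ (↑R : Multiset ℕ) = ↑(w.drop m) + ↑st := by
  obtain ⟨st0, o0, tr1, tr2⟩ := reach_drop h m (le_of_lt hm)
  have hne : w.drop m ≠ [] := by
    intro hc; rw [List.drop_eq_nil_iff] at hc; omega
  obtain ⟨st, o, tra, hc1, hc2, trb⟩ := find_push _ tr2 (w.drop m) st0 o0 rfl hne
  have hdm : w.drop m = w[m] :: w.drop (m+1) := List.drop_eq_getElem_cons hm
  have hhead : (w.drop m).headI = w[m] := by rw [hdm]; rfl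
  rw [hhead] at hc1 hc2
  have tr1' : Relation.ReflTransGen (StackStep k) (w, [], []) (w.drop m, st, o) := tr1.trans tra
  have hsort : st.Pairwise (· ≤ ·) := sorted_inv tr1' (by simp)
  have hmul : (↑w : Multiset ℕ) = ↑(w.drop m) + ↑st + ↑o := by
    have := multiset_inv tr1'
    simpa using this
  have hso : (↑st + ↑o : Multiset ℕ) = ↑(w.take m) := by
    have hw : (↑(w.take m) + ↑(w.drop m) : Multiset ℕ) = ↑w := by
      rw [show (↑(w.take m) + ↑(w.drop m) : Multiset ℕ) = ↑(w.take m ++ w.drop m) from rfl,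
        List.take_append_drop]
    have : (↑(w.drop m) + (↑(w.take m)) : Multiset ℕ) = ↑(w.drop m) + (↑st + ↑o) := by
      rw [add_comm (↑(w.drop m) : Multiset ℕ), hw, hmul, add_assoc]
    exact (add_left_cancel this).symm
  have hpre : o <+: out := prefix_inv trb
  obtain ⟨R, hR⟩ := hpre
  have hmulout : (↑w : Multiset ℕ) = ↑out := by
    have := multiset_inv h
    simpa using this
  have hRm : (↑R : Multiset ℕ) = ↑(w.drop m) + ↑st := by
    have h1 : (↑o + ↑R : Multiset ℕ) = ↑out := by rw [← hR]; rfl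
    have h2 : (↑o + ↑R : Multiset ℕ) = ↑o + (↑(w.drop m) + ↑st) := by
      rw [h1, ← hmulout, hmul]
      exact add_comm _ _
    exact add_left_cancel h2
  exact ⟨st, o, R, hsort, hc1, hc2, hso, hR.symm, hRm⟩

lemma mem_take_of_lt {w : List ℕ} {i m : ℕ} (him : i < m) (hi : i < w.length) :
    w[i] ∈ w.take m := by
  have h1 : i < (w.take m).length := by simp; omega
  have : (w.take m)[i]'h1 = w[i] := List.getElem_take
  rw [← this]
  exact List.getElem_mem h1

lemma mem_drop_of_le {w : List ℕ} {m l : ℕ} (hml : m ≤ l) (hl : l < w.length) :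
    w[l] ∈ w.drop m := by
  have h1 : l - m < (w.drop m).length := by simp; omega
  have : (w.drop m)[l - m] = w[l] := by
    rw [List.getElem_drop]
    congr 1
    omega
  rw [← this]
  exact List.getElem_mem h1


/-- A word is sortable by a stack of depth k iff it avoids 120 and the strictly
decreasing pattern k(k-1)...10 of length k+1. -/
theorem stack_depth_sortable_iff (k : ℕ) (w : List ℕ) :
    StackSortableDepth k w ↔ ¬ Contains120 w ∧ ¬ ContainsDec (k + 1) w := by
  constructor
  · rintro ⟨out, tr, hsort⟩
    constructor
    · rintro ⟨i, j, l, hij, hjl, hl, h1, h2⟩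
      have hi : i < w.length := by omega
      have hj : j < w.length := by omega
      rw [List.getD_eq_getElem w 0 hl, List.getD_eq_getElem w 0 hi] at h1
      rw [List.getD_eq_getElem w 0 hi, List.getD_eq_getElem w 0 hj] at h2
      obtain ⟨st, o, R, hstsort, hc1, hc2, hso, houtR, hRm⟩ := moment tr hj
      have hwi : w[i] ∈ (↑st + ↑o : Multiset ℕ) := by
        rw [hso, Multiset.mem_coe]
        exact mem_take_of_lt hij hi
      rw [Multiset.mem_add, Multiset.mem_coe, Multiset.mem_coe] at hwi
      rcases hwi with hwi | hwi
      · -- w[i] in stack; push of w[j] contradicts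
        rcases hc1 with hst | hle
        · rw [hst] at hwi; simp at hwi
        · have := headI_le_of_sorted hstsort hwi
          omega
      · -- w[i] already output; w[l] comes later
        have hwl : w[l] ∈ R := by
          rw [← Multiset.mem_coe, hRm, Multiset.mem_add, Multiset.mem_coe]
          exact Or.inl (mem_drop_of_le (by omega) hl)
        have := sorted_cross (houtR ▸ hsort) hwi hwl
        omega
    · rintro ⟨s, hs, hslt, hsval⟩
      set m := s (Fin.last k) with hmdef
      have hm : m < w.length := hslt (Fin.last k)
      obtain ⟨st, o, R, hstsort, hc1, hc2, hso, houtR, hRm⟩ := moment tr hm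
      have hmem : ∀ a : Fin (k + 1), w[s a]'(hslt a) ∈ w[m] :: st := by
        intro a
        rcases eq_or_lt_of_le (Fin.le_last a) with ha | ha
        · have : s a = m := by rw [hmdef, ha]
          simp only [List.mem_cons]
          left
          congr 1
        · have hsa : s a < m := hs ha
          have hval : w[m] < w[s a]'(hslt a) := by
            have := hsval a (Fin.last k) ha
            rwa [List.getD_eq_getElem w 0 hm, List.getD_eq_getElem w 0 (hslt a)] at this
          have hwa : w[s a]'(hslt a) ∈ (↑st + ↑o : Multiset ℕ) := by
            rw [hso, Multiset.mem_coe]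
            exact mem_take_of_lt hsa (hslt a)
          rw [Multiset.mem_add, Multiset.mem_coe, Multiset.mem_coe] at hwa
          rcases hwa with hwa | hwa
          · exact List.mem_cons_of_mem _ hwa
          · exfalso
            have hwm : w[m] ∈ R := by
              rw [← Multiset.mem_coe, hRm, Multiset.mem_add, Multiset.mem_coe]
              exact Or.inl (mem_drop_of_le le_rfl hm)
            have := sorted_cross (houtR ▸ hsort) hwa hwm
            omega
      -- k+1 distinct values in w[m] :: st
      have hinj : Function.Injective (fun a : Fin (k + 1) => w[s a]'(hslt a)) := by
        intro a b hab
        by_contra hne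
        rcases Ne.lt_or_gt hne with hlt | hlt
        · have := hsval a b hlt
          rw [List.getD_eq_getElem w 0 (hslt a), List.getD_eq_getElem w 0 (hslt b)] at this
          simp only at hab
          omega
        · have := hsval b a hlt
          rw [List.getD_eq_getElem w 0 (hslt a), List.getD_eq_getElem w 0 (hslt b)] at this
          simp only at hab
          omega
      have hcard : k + 1 ≤ (w[m] :: st).dedup.length := by
        rw [← List.card_toFinset]
        have hsub : Finset.image (fun a : Fin (k + 1) => w[s a]'(hslt a)) Finset.univ ⊆
            (w[m] :: st).toFinset := by
          intro x hx
          rw [Finset.mem_image] at hx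
          obtain ⟨a, _, ha⟩ := hx
          rw [List.mem_toFinset, ← ha]
          exact hmem a
        calc k + 1 = (Finset.image (fun a : Fin (k + 1) => w[s a]'(hslt a)) Finset.univ).card := by
              rw [Finset.card_image_of_injective _ hinj, Finset.card_univ, Fintype.card_fin]
          _ ≤ _ := Finset.card_le_card hsub
      omega
  · rintro ⟨h120, hdec⟩
    obtain ⟨out, tr, hs⟩ := greedy_lemma k (2 * w.length) w [] [] (by simp) (by simp) (by simp)
      (by simp) (by simpa using h120) (by simpa using hdec)
    exact ⟨out, tr, hs⟩
end

section
/- A word w over the nonnegative integers is sortable by a (2,1)-pop stack of depth two if and only if w avoids the patterns 120, 201, and 210. -/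
/-- One step of a (2,1)-pop stack of depth two, acting on states (input, stack, output):
one may push the next input letter either on top of the stack or just below the topmost
run of equal values (the second "value position"), provided the stack holds at most two
distinct values; or pop the entire stack to the output. -/
inductive PS21Step : List ℕ × List ℕ × List ℕ → List ℕ × List ℕ × List ℕ → Prop
  | pushTop (x : ℕ) (xs st out : List ℕ) :
      (x :: st).dedup.length ≤ 2 →
      PS21Step (x :: xs, st, out) (xs, x :: st, out)
  | pushSecond (x : ℕ) (xs st out : List ℕ) :
      st ≠ [] → (x :: st).dedup.length ≤ 2 →
      PS21Step (x :: xs, st, out)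
        (xs, (st.takeWhile fun y => y = st.headI) ++ x :: (st.dropWhile fun y => y = st.headI),
          out)
  | pop (xs st out : List ℕ) : st ≠ [] → PS21Step (xs, st, out) (xs, [], out ++ st)

/-- w is sortable by a (2,1)-pop stack of depth two: some sequence of legal operations
consumes the input and produces a weakly increasing output. -/
def PS21Sortable (w : List ℕ) : Prop :=
  ∃ out : List ℕ, Relation.ReflTransGen PS21Step (w, [], []) ([], [], out) ∧
    List.Pairwise (· ≤ ·) out


/-- Words decomposable into blocks with ≤ 2 distinct values each, weakly increasing across blocks. -/
inductive Blocks : List ℕ → Prop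
  | nil : Blocks []
  | cons (b w : List ℕ) (hb : b.toFinset.card ≤ 2)
      (hle : ∀ x ∈ b, ∀ y ∈ w, x ≤ y) (hw : Blocks w) : Blocks (b ++ w)


lemma blocks_no3 {w : List ℕ} (hw : Blocks w) : ∀ i j k, i < j → j < k → k < w.length →
    ¬((w.getD k 0 < w.getD i 0 ∧ w.getD i 0 < w.getD j 0) ∨
      (w.getD j 0 < w.getD k 0 ∧ w.getD k 0 < w.getD i 0) ∨
      (w.getD k 0 < w.getD j 0 ∧ w.getD j 0 < w.getD i 0)) := by
  induction hw with
  | nil => intro i j k _ _ h3; simp at h3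
  | cons b w hb hle hw ih =>
    intro i j k h1 h2 h3 hpat
    rw [List.length_append] at h3
    have hmemb : ∀ m, m < b.length → (b ++ w).getD m 0 ∈ b := by
      intro m hm
      rw [List.getD_append _ _ _ _ hm, List.getD_eq_getElem _ _ hm]
      exact List.getElem_mem _
    have hvalw : ∀ m, b.length ≤ m → (b ++ w).getD m 0 = w.getD (m - b.length) 0 :=
      fun m hm => List.getD_append_right _ _ _ _ hm
    have hmemw : ∀ m, b.length ≤ m → m < b.length + w.length → (b ++ w).getD m 0 ∈ w := by
      intro m hm hm'
      rw [hvalw m hm, List.getD_eq_getElem _ _ (by omega)]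
      exact List.getElem_mem _
    by_cases hk : k < b.length
    · -- all three indices in b : three distinct values in a ≤2-valued block
      have hi := hmemb i (by omega)
      have hj := hmemb j (by omega)
      have hk' := hmemb k hk
      have hcard : ({(b++w).getD i 0, (b++w).getD j 0, (b++w).getD k 0} : Finset ℕ).card = 3 :=
        Finset.card_eq_three.mpr ⟨_, _, _, by omega, by omega, by omega, rfl⟩
      have hsub : ({(b++w).getD i 0, (b++w).getD j 0, (b++w).getD k 0} : Finset ℕ) ⊆ b.toFinset := by
        intro x hx
        simp only [Finset.mem_insert, Finset.mem_singleton] at hx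
        rcases hx with rfl | rfl | rfl
        exacts [List.mem_toFinset.mpr hi, List.mem_toFinset.mpr hj, List.mem_toFinset.mpr hk']
      have := Finset.card_le_card hsub
      omega
    · by_cases hi : b.length ≤ i
      · -- all three in w
        rw [hvalw i hi, hvalw j (by omega), hvalw k (by omega)] at hpat
        exact ih (i - b.length) (j - b.length) (k - b.length)
          (by omega) (by omega) (by omega) hpat
      · -- i in b, k in w
        have hik := hle _ (hmemb i (by omega)) _ (hmemw k (by omega) (by omega))
        by_cases hj : j < b.length
        · have hjk := hle _ (hmemb j hj) _ (hmemw k (by omega) (by omega))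
          omega
        · have hij := hle _ (hmemb i (by omega)) _ (hmemw j (by omega) (by omega))
          omega

def NoPat (w : List ℕ) : Prop := ∀ i j k, i < j → j < k → k < w.length →
    ¬((w.getD k 0 < w.getD i 0 ∧ w.getD i 0 < w.getD j 0) ∨
      (w.getD j 0 < w.getD k 0 ∧ w.getD k 0 < w.getD i 0) ∨
      (w.getD k 0 < w.getD j 0 ∧ w.getD j 0 < w.getD i 0))

lemma getD_drop' (w : List ℕ) (n i : ℕ) : (w.drop n).getD i 0 = w.getD (n + i) 0 := by
  simp [List.getD_eq_getElem?_getD, List.getElem?_drop]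

lemma noPat_drop {w : List ℕ} (h : NoPat w) (n : ℕ) : NoPat (w.drop n) := by
  intro i j k h1 h2 h3 hpat
  rw [List.length_drop] at h3
  rw [getD_drop', getD_drop', getD_drop'] at hpat
  exact h (n+i) (n+j) (n+k) (by omega) (by omega) (by omega) hpat

lemma avoid_blocks : ∀ (N : ℕ) (w : List ℕ), w.length ≤ N → NoPat w → Blocks w := by
  intro N
  induction N with
  | zero =>
    intro w h _
    have : w = [] := List.length_eq_zero_iff.mp (by omega)
    exact this ▸ Blocks.nil
  | succ N ih =>
    intro w hlen hnp
    match w with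
    | [] => exact Blocks.nil
    | a :: t =>
      by_cases hex : ∃ k, k < (a :: t).length ∧ (a :: t).getD k 0 < a
      · obtain ⟨k0, hk0, hk0'⟩ := hex
        set K := Nat.findGreatest (fun k => (a :: t).getD k 0 < a) ((a :: t).length - 1) with hKdef
        have hPK : (a :: t).getD K 0 < a :=
          Nat.findGreatest_spec (P := fun k => (a :: t).getD k 0 < a) (m := k0)
            (by simp only [List.length_cons] at hk0 ⊢; omega) hk0'
        have hK1 : 1 ≤ K := by
          rcases Nat.eq_zero_or_pos K with hz | hp
          · rw [hz] at hPK; simp at hPK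
          · exact hp
        have hKlen : K < (a :: t).length := by
          have := Nat.findGreatest_le (P := fun k => (a :: t).getD k 0 < a) ((a :: t).length - 1)
          simp only [List.length_cons] at *
          omega
        have hmax : ∀ m, K < m → m < (a :: t).length → a ≤ (a :: t).getD m 0 := by
          intro m hm hmlen
          have := Nat.findGreatest_is_greatest (P := fun k => (a :: t).getD k 0 < a)
            (n := (a :: t).length - 1) hm (by simp at hmlen ⊢; omega)
          omega
        have hvals : ∀ j, j < K + 1 → (a :: t).getD j 0 = a ∨ (a :: t).getD j 0 = (a :: t).getD K 0 := by
          intro j hj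
          rcases Nat.eq_zero_or_pos j with rfl | hj0
          · left; rfl
          · by_cases hjK : j = K
            · right; rw [hjK]
            · have h := hnp 0 j K hj0 (by omega) hKlen
              have h0 : (a :: t).getD 0 0 = a := rfl
              rw [h0] at h
              omega
        have hw : a :: t = (a :: t).take (K+1) ++ (a :: t).drop (K+1) :=
          (List.take_append_drop _ _).symm
        rw [hw]
        apply Blocks.cons
        · -- card of block ≤ 2
          have hsub : ((a :: t).take (K+1)).toFinset ⊆ {a, (a :: t).getD K 0} := by
            intro x hx
            rw [List.mem_toFinset] at hx
            obtain ⟨i, hi, rfl⟩ := List.mem_iff_getElem.mp hx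
            have hi' : i < K + 1 := by
              rw [List.length_take] at hi; omega
            have hval := hvals i hi'
            rw [List.getD_eq_getElem _ _ (by omega), List.getD_eq_getElem _ _ hKlen] at hval
            rw [List.getElem_take]
            simp only [Finset.mem_insert, Finset.mem_singleton]
            rw [List.getD_eq_getElem _ _ hKlen]
            exact hval
          have h2 := Finset.card_le_card hsub
          have : ({a, (a :: t).getD K 0} : Finset ℕ).card ≤ 2 := by
            apply le_trans (Finset.card_insert_le _ _); simp
          omega
        · -- cross inequality
          intro x hx y hy
          obtain ⟨i, hi, rfl⟩ := List.mem_iff_getElem.mp hx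
          obtain ⟨i', hi', rfl⟩ := List.mem_iff_getElem.mp hy
          have hi2 : i < K + 1 := by rw [List.length_take] at hi; omega
          have hval := hvals i hi2
          rw [List.getD_eq_getElem _ _ (by omega : i < (a :: t).length)] at hval
          rw [List.getElem_take]
          have hi'2 : K + 1 + i' < (a :: t).length := by
            rw [List.length_drop] at hi'; omega
          have hy2 := hmax (K + 1 + i') (by omega) hi'2
          rw [List.getD_eq_getElem _ _ hi'2] at hy2
          have hdrop : ((a :: t).drop (K+1))[i'] = (a :: t)[K + 1 + i']'hi'2 := by
            rw [List.getElem_drop]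
          rw [hdrop]
          rw [List.getD_eq_getElem _ _ hKlen] at hval
          rw [List.getD_eq_getElem _ _ hKlen] at hPK
          omega
        · -- Blocks of the rest
          apply ih
          · rw [List.length_drop]; simp only [List.length_cons] at hlen ⊢; omega
          · exact noPat_drop hnp (K+1)
      · push_neg at hex
        have hsplit : a :: t = [a] ++ t := rfl
        rw [hsplit]
        apply Blocks.cons
        · simp
        · intro x hx y hy
          simp only [List.mem_singleton] at hx
          rw [hx]
          obtain ⟨i, hi, rfl⟩ := List.mem_iff_getElem.mp hy
          have := hex (i+1) (by simp; omega)
          rw [List.getD_eq_getElem _ _ (by simp; omega : i + 1 < (a :: t).length)] at this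
          simp only [List.getElem_cons_succ] at this
          omega
        · apply ih
          · simp only [List.length_cons] at hlen; omega
          · have : t = (a :: t).drop 1 := rfl
            rw [this]; exact noPat_drop hnp 1

lemma run_perm {f : List ℕ} : ∀ {s : List ℕ × List ℕ × List ℕ},
    Relation.ReflTransGen PS21Step s ([], [], f) →
    ∃ r : List ℕ, f = s.2.2 ++ r ∧ r.Perm (s.2.1 ++ s.1) := by
  intro s h
  induction h using Relation.ReflTransGen.head_induction_on with
  | refl => exact ⟨[], by simp, by simp⟩
  | head h' h ih =>
    obtain ⟨r, hr, hm⟩ := ih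
    cases h' with
    | pushTop x xs st out hd =>
      exact ⟨r, hr, hm.trans List.perm_middle.symm⟩
    | pushSecond x xs st out hne hd =>
      refine ⟨r, hr, hm.trans ?_⟩
      have h1 : ((st.takeWhile fun y => y = st.headI) ++ x :: (st.dropWhile fun y => y = st.headI)).Perm
          (x :: st) := by
        refine List.perm_middle.trans ?_
        rw [List.takeWhile_append_dropWhile]
      exact (h1.append_right xs).trans List.perm_middle.symm
    | pop xs st out hne =>
      refine ⟨st ++ r, by rw [hr, List.append_assoc], ?_⟩
      simp only [List.nil_append] at hm
      exact hm.append_left st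

def BlocksW (st xs : List ℕ) : Prop :=
  ∃ b rest, xs = b ++ rest ∧ (st ++ b).toFinset.card ≤ 2 ∧
    (∀ x ∈ st ++ b, ∀ y ∈ rest, x ≤ y) ∧ Blocks rest

lemma sortable_blocksW {f : List ℕ} (hf : List.Pairwise (· ≤ ·) f) :
    ∀ {s : List ℕ × List ℕ × List ℕ}, Relation.ReflTransGen PS21Step s ([], [], f) →
    s.2.1.toFinset.card ≤ 2 → BlocksW s.2.1 s.1 := by
  intro s h
  induction h using Relation.ReflTransGen.head_induction_on with
  | refl => exact fun _ => ⟨[], [], rfl, by simp, by simp, Blocks.nil⟩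
  | head h' h ih =>
    intro hcard
    cases h' with
    | pushTop x xs st out hd =>
      have hc2 : (x :: st).toFinset.card ≤ 2 := by rw [List.card_toFinset]; exact hd
      obtain ⟨b, rest, hxs, hbc, hble, hbl⟩ := ih hc2
      dsimp only at hxs hbc hble
      refine ⟨x :: b, rest, by dsimp only; rw [hxs]; rfl, ?_, ?_, hbl⟩
      · have he : (st ++ x :: b).toFinset = ((x :: st) ++ b).toFinset := by
          ext y
          simp only [List.toFinset_append, Finset.mem_union, List.mem_toFinset, List.mem_cons]
          tauto
        rw [he]; exact hbc
      · intro z hz y hy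
        apply hble z ?_ y hy
        simp only [List.mem_append, List.mem_cons] at hz ⊢
        tauto
    | pushSecond x xs st out hne hd =>
      have hmem : ∀ a : ℕ,
          (a ∈ (st.takeWhile fun y => y = st.headI) ++ x :: (st.dropWhile fun y => y = st.headI))
          ↔ a ∈ x :: st := by
        intro a
        simp only [List.mem_append, List.mem_cons]
        conv_rhs => rw [← List.takeWhile_append_dropWhile (p := fun y => decide (y = st.headI)) (l := st)]
        simp only [List.mem_append]
        tauto
      have hc2 : ((st.takeWhile fun y => y = st.headI) ++ x :: (st.dropWhile fun y => y = st.headI)).toFinset.card ≤ 2 := by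
        have he : ((st.takeWhile fun y => y = st.headI) ++ x :: (st.dropWhile fun y => y = st.headI)).toFinset
            = (x :: st).toFinset := by
          ext y; simp only [List.mem_toFinset]; exact hmem y
        rw [he, List.card_toFinset]; exact hd
      obtain ⟨b, rest, hxs, hbc, hble, hbl⟩ := ih hc2
      dsimp only at hxs hbc hble
      refine ⟨x :: b, rest, by dsimp only; rw [hxs]; rfl, ?_, ?_, hbl⟩
      · have he : (st ++ x :: b).toFinset =
            (((st.takeWhile fun y => y = st.headI) ++ x :: (st.dropWhile fun y => y = st.headI)) ++ b).toFinset := by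
          ext y
          simp only [List.toFinset_append, Finset.mem_union, List.mem_toFinset, List.mem_cons]
          have := hmem y
          simp only [List.mem_append, List.mem_cons] at this
          tauto
        rw [he]; exact hbc
      · intro z hz y hy
        apply hble z ?_ y hy
        have := hmem z
        simp only [List.mem_append, List.mem_cons] at hz this ⊢
        tauto
    | pop xs st out hne =>
      obtain ⟨b, rest, hxs, hbc, hble, hbl⟩ := ih (by simp)
      dsimp only at hxs hbc hble
      have hblocks : Blocks xs := by
        rw [hxs]
        exact Blocks.cons b rest (by simpa using hbc)
          (fun x hx => hble x (by simpa using hx)) hbl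
      obtain ⟨r, hfr, hperm⟩ := run_perm h
      refine ⟨[], xs, by simp, by simpa using hcard, ?_, hblocks⟩
      intro z hz y hy
      simp only [List.append_nil] at hz
      have hy' : y ∈ r := hperm.mem_iff.mpr (by simpa using hy)
      rw [hfr, List.append_assoc] at hf
      have h1 : List.Pairwise (· ≤ ·) (st ++ r) := (List.pairwise_append.mp hf).2.1
      exact (List.pairwise_append.mp h1).2.2 z hz y hy'

lemma blocksW_nil {xs : List ℕ} (h : BlocksW [] xs) : Blocks xs := by
  obtain ⟨b, rest, rfl, hc, hle, hb⟩ := h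
  exact Blocks.cons _ _ (by simpa using hc) (fun x hx => hle x (by simpa using hx)) hb

lemma run_lift_out (z : List ℕ) {s t : List ℕ × List ℕ × List ℕ}
    (h : Relation.ReflTransGen PS21Step s t) :
    Relation.ReflTransGen PS21Step (s.1, s.2.1, z ++ s.2.2) (t.1, t.2.1, z ++ t.2.2) := by
  refine Relation.ReflTransGen.lift (fun s : List ℕ × List ℕ × List ℕ => (s.1, s.2.1, z ++ s.2.2)) ?_ _ _ h
  intro a b hab
  cases hab with
  | pushTop x xs st out hd => exact PS21Step.pushTop x xs st (z ++ out) hd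
  | pushSecond x xs st out hne hd => exact PS21Step.pushSecond x xs st (z ++ out) hne hd
  | pop xs st out hne =>
    have := PS21Step.pop xs st (z ++ out) hne
    simpa [List.append_assoc] using this

lemma tw_rep0 (u v : ℕ) (huv : u ≠ v) (q : ℕ) :
    (List.replicate q v).takeWhile (fun y => y = u) = [] := by
  cases q with
  | zero => rfl
  | succ q => simp [List.replicate_succ, List.takeWhile_cons, Ne.symm huv]
    
lemma tw_rep (u v : ℕ) (huv : u ≠ v) (p q : ℕ) :
    ((List.replicate p u ++ List.replicate q v).takeWhile fun y => y = u)
      = List.replicate p u := by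
  induction p with
  | zero => simpa using tw_rep0 u v huv q
  | succ p ih => simp [List.replicate_succ, List.takeWhile_cons, ih]

lemma dw_rep0 (u v : ℕ) (huv : u ≠ v) (q : ℕ) :
    (List.replicate q v).dropWhile (fun y => y = u) = List.replicate q v := by
  cases q with
  | zero => rfl
  | succ q => simp [List.replicate_succ, List.dropWhile_cons, Ne.symm huv]

lemma dw_rep (u v : ℕ) (huv : u ≠ v) (p q : ℕ) :
    ((List.replicate p u ++ List.replicate q v).dropWhile fun y => y = u)
      = List.replicate q v := by
  induction p with
  | zero => simpa using dw_rep0 u v huv q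
  | succ p ih => simpa [List.replicate_succ, List.dropWhile_cons] using ih

lemma dedup_le_two {st : List ℕ} {u v : ℕ} (hst : ∀ y ∈ st, y = u ∨ y = v) :
    st.dedup.length ≤ 2 := by
  have hsub : st.toFinset ⊆ {u, v} := by
    intro y hy
    rw [List.mem_toFinset] at hy
    simpa [Finset.mem_insert, Finset.mem_singleton] using hst y hy
  calc st.dedup.length = st.toFinset.card := (List.card_toFinset st).symm
    _ ≤ ({u, v} : Finset ℕ).card := Finset.card_le_card hsub
    _ ≤ 2 := Finset.card_le_two

lemma push_block (u v : ℕ) (huv : u < v) :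
    ∀ (b : List ℕ), (∀ x ∈ b, x = u ∨ x = v) → ∀ (p q : ℕ) (rest out : List ℕ),
    Relation.ReflTransGen PS21Step
      (b ++ rest, List.replicate p u ++ List.replicate q v, out)
      (rest, List.replicate (p + b.count u) u ++ List.replicate (q + b.count v) v, out) := by
  intro b
  induction b with
  | nil => intro _ p q rest out; simpa using Relation.ReflTransGen.refl
  | cons x b ihb =>
    intro hb p q rest out
    have hb' : ∀ y ∈ b, y = u ∨ y = v := fun y hy => hb y (List.mem_cons_of_mem _ hy)
    have hmemst : ∀ y ∈ (List.replicate p u ++ List.replicate q v), y = u ∨ y = v := by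
      intro y hy
      rcases List.mem_append.mp hy with hy | hy <;>
        simp [List.mem_replicate] at hy <;> tauto
    rcases hb x List.mem_cons_self with rfl | rfl
    · -- x = u : push on top
      have hd : (x :: (List.replicate p x ++ List.replicate q v)).dedup.length ≤ 2 := by
        apply dedup_le_two (u := x) (v := v)
        intro y hy
        rcases List.mem_cons.mp hy with rfl | hy
        · left; rfl
        · exact hmemst y hy
      have step := PS21Step.pushTop x (b ++ rest) (List.replicate p x ++ List.replicate q v) out hd
      have e1 : p + (x :: b).count x = (p + 1) + b.count x := by
        rw [List.count_cons_self]; omega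
      have e2 : q + ((x :: b).count v) = q + b.count v := by
        rw [List.count_cons_of_ne (by omega)]
      rw [e1, e2]
      refine Relation.ReflTransGen.head ?_ (ihb hb' (p+1) q rest out)
      simpa [List.replicate_succ] using step
    · -- x = v
      have e1 : p + ((x :: b).count u) = p + b.count u := by
        rw [List.count_cons_of_ne (by omega)]
      have e2 : q + (x :: b).count x = (q + 1) + b.count x := by
        rw [List.count_cons_self]; omega
      rw [e1, e2]
      have hd : (x :: (List.replicate p u ++ List.replicate q x)).dedup.length ≤ 2 := by
        apply dedup_le_two (u := u) (v := x)
        intro y hy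
        rcases List.mem_cons.mp hy with rfl | hy
        · right; rfl
        · exact hmemst y hy
      rcases Nat.eq_zero_or_pos p with rfl | hp
      · have step := PS21Step.pushTop x (b ++ rest) (List.replicate 0 u ++ List.replicate q x) out hd
        refine Relation.ReflTransGen.head ?_ (ihb hb' 0 (q+1) rest out)
        simpa [List.replicate_succ] using step
      · obtain ⟨p', rfl⟩ : ∃ p', p = p' + 1 := ⟨p - 1, by omega⟩
        have hne : (List.replicate (p'+1) u ++ List.replicate q x) ≠ [] := by
          simp [List.replicate_succ]
        have step := PS21Step.pushSecond x (b ++ rest)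
          (List.replicate (p'+1) u ++ List.replicate q x) out hne hd
        have hH : (List.replicate (p'+1) u ++ List.replicate q x).headI = u := by
          simp [List.replicate_succ]
        simp only [hH] at step
        rw [tw_rep u x (by omega) (p'+1) q, dw_rep u x (by omega) (p'+1) q] at step
        refine Relation.ReflTransGen.head ?_ (ihb hb' (p'+1) (q+1) rest out)
        have heq : List.replicate (p'+1) u ++ x :: List.replicate q x
            = List.replicate (p'+1) u ++ List.replicate (q+1) x := by
          simp [List.replicate_succ]
        rwa [heq] at step

lemma sorted_rep2 (u v p q : ℕ) (h : u ≤ v) :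
    List.Pairwise (· ≤ ·) (List.replicate p u ++ List.replicate q v) := by
  apply List.pairwise_append.mpr
  refine ⟨?_, ?_, ?_⟩
  · exact List.pairwise_replicate.mpr (Or.inr le_rfl)
  · exact List.pairwise_replicate.mpr (Or.inr le_rfl)
  · intro a ha b hb
    rw [List.mem_replicate] at ha hb
    omega

lemma exists_two_vals {b : List ℕ} (hbne : b ≠ []) (hb : b.toFinset.card ≤ 2) :
    ∃ u v, u < v ∧ ∀ x ∈ b, x = u ∨ x = v := by
  have hne : b.toFinset.Nonempty := by
    obtain ⟨x, hx⟩ := List.exists_mem_of_ne_nil b hbne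
    exact ⟨x, List.mem_toFinset.mpr hx⟩
  set u := b.toFinset.min' hne with hu
  set v := b.toFinset.max' hne with hv
  have huv : u ≤ v := Finset.min'_le _ _ (Finset.max'_mem _ _)
  have hall : ∀ x ∈ b, x = u ∨ x = v := by
    intro x hx
    by_contra hcon
    push_neg at hcon
    have hxu : u ≤ x := Finset.min'_le _ _ (List.mem_toFinset.mpr hx)
    have hxv : x ≤ v := Finset.le_max' _ _ (List.mem_toFinset.mpr hx)
    have hsub : ({u, x, v} : Finset ℕ) ⊆ b.toFinset := by
      intro y hy
      simp only [Finset.mem_insert, Finset.mem_singleton] at hy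
      rcases hy with rfl | rfl | rfl
      · exact Finset.min'_mem _ _
      · exact List.mem_toFinset.mpr hx
      · exact Finset.max'_mem _ _
    have hcard : ({u, x, v} : Finset ℕ).card = 3 :=
      Finset.card_eq_three.mpr ⟨_, _, _, fun h => hcon.1 h.symm, by omega, hcon.2, rfl⟩
    have := Finset.card_le_card hsub
    omega
  rcases lt_or_eq_of_le huv with hlt | heq
  · exact ⟨u, v, hlt, hall⟩
  · refine ⟨u, u + 1, by omega, ?_⟩
    intro x hx
    rcases hall x hx with rfl | h
    · exact Or.inl rfl
    · left; omega

lemma blocks_sortable {w : List ℕ} (h : Blocks w) :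
    ∃ out, Relation.ReflTransGen PS21Step (w, [], []) ([], [], out) ∧
      List.Pairwise (· ≤ ·) out := by
  induction h with
  | nil => exact ⟨[], Relation.ReflTransGen.refl, List.Pairwise.nil⟩
  | cons b w hb hle hw ih =>
    obtain ⟨o, ho, hos⟩ := ih
    rcases eq_or_ne b [] with rfl | hbne
    · exact ⟨o, by simpa using ho, hos⟩
    · obtain ⟨u, v, huv, hbv⟩ := exists_two_vals hbne hb
      have hrun1 := push_block u v huv b hbv 0 0 w []
      simp only [Nat.zero_add] at hrun1
      set stk := List.replicate (b.count u) u ++ List.replicate (b.count v) v with hstk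
      have hstk_ne : stk ≠ [] := by
        obtain ⟨x, hx⟩ := List.exists_mem_of_ne_nil b hbne
        intro hcon
        rw [hstk, List.append_eq_nil_iff] at hcon
        have h1 : b.count u = 0 := by simpa using congrArg List.length hcon.1
        have h2 : b.count v = 0 := by simpa using congrArg List.length hcon.2
        rcases hbv x hx with rfl | rfl
        · exact absurd (List.count_pos_iff.mpr hx) (by omega)
        · exact absurd (List.count_pos_iff.mpr hx) (by omega)
      have hpop : PS21Step (w, stk, []) (w, [], stk) := by
        simpa using PS21Step.pop w stk [] hstk_ne
      have hrun2 : Relation.ReflTransGen PS21Step (w, [], stk) ([], [], stk ++ o) := by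
        have := run_lift_out stk ho
        simpa using this
      refine ⟨stk ++ o, ?_, ?_⟩
      · exact (hrun1.trans (Relation.ReflTransGen.single hpop)).trans hrun2
      · apply List.pairwise_append.mpr
        refine ⟨sorted_rep2 u v _ _ huv.le, hos, ?_⟩
        intro x hx y hy
        have hxb : x ∈ b := by
          rcases List.mem_append.mp hx with hx | hx <;> rw [List.mem_replicate] at hx
          · rcases hx with ⟨hc, rfl⟩
            exact List.count_pos_iff.mp (by omega)
          · rcases hx with ⟨hc, rfl⟩
            exact List.count_pos_iff.mp (by omega)
        have hyw : y ∈ w := by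
          obtain ⟨r, hfr, hperm⟩ := run_perm ho
          dsimp only at hfr hperm
          rw [List.nil_append] at hfr
          rw [hfr] at hy
          simpa using hperm.subset hy
        exact hle x hxb y hyw


/-- A word is sortable by a (2,1)-pop stack of depth two iff it avoids 120, 201, 210. -/
theorem ps21_sortable_iff (w : List ℕ) :
    PS21Sortable w ↔ ¬ Contains120 w ∧ ¬ Contains201 w ∧ ¬ Contains210 w := by
  constructor
  · rintro ⟨f, hrun, hf⟩
    have hB : Blocks w := blocksW_nil (sortable_blocksW hf hrun (by simp))
    refine ⟨?_, ?_, ?_⟩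
    · rintro ⟨i, j, k, h1, h2, h3, h4, h5⟩
      exact blocks_no3 hB i j k h1 h2 h3 (Or.inl ⟨h4, h5⟩)
    · rintro ⟨i, j, k, h1, h2, h3, h4, h5⟩
      exact blocks_no3 hB i j k h1 h2 h3 (Or.inr (Or.inl ⟨h4, h5⟩))
    · rintro ⟨i, j, k, h1, h2, h3, h4, h5⟩
      exact blocks_no3 hB i j k h1 h2 h3 (Or.inr (Or.inr ⟨h4, h5⟩))
  · rintro ⟨h1, h2, h3⟩
    have hnp : NoPat w := by
      intro i j k hij hjk hk hpat
      rcases hpat with ⟨ha, hb⟩ | ⟨ha, hb⟩ | ⟨ha, hb⟩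
      · exact h1 ⟨i, j, k, hij, hjk, hk, ha, hb⟩
      · exact h2 ⟨i, j, k, hij, hjk, hk, ha, hb⟩
      · exact h3 ⟨i, j, k, hij, hjk, hk, ha, hb⟩
    exact blocks_sortable (avoid_blocks w.length w le_rfl hnp)
end

section
/- The number of permutations of length n avoiding the patterns 231, 312, and 321 equals the (n+1)st Fibonacci number F_{n+1} (with F_1 = F_2 = 1). -/
def PContains231 {n : ℕ} (σ : Equiv.Perm (Fin n)) : Prop :=
  ∃ i j k : Fin n, i < j ∧ j < k ∧ σ k < σ i ∧ σ i < σ j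

def PContains312 {n : ℕ} (σ : Equiv.Perm (Fin n)) : Prop :=
  ∃ i j k : Fin n, i < j ∧ j < k ∧ σ j < σ k ∧ σ k < σ i

def PContains321 {n : ℕ} (σ : Equiv.Perm (Fin n)) : Prop :=
  ∃ i j k : Fin n, i < j ∧ j < k ∧ σ k < σ j ∧ σ j < σ i

open Equiv Finset

/-- Avoidance is preserved under taking inverses (the pattern set is closed under inverse). -/
lemma avoid_inv {n : ℕ} (σ : Equiv.Perm (Fin n))
    (h : ¬ PContains231 σ ∧ ¬ PContains312 σ ∧ ¬ PContains321 σ) :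
    ¬ PContains231 σ⁻¹ ∧ ¬ PContains312 σ⁻¹ ∧ ¬ PContains321 σ⁻¹ := by
  obtain ⟨h1, h2, h3⟩ := h
  refine ⟨fun ⟨i, j, k, hij, hjk, p1, p2⟩ => h2 ?_,
          fun ⟨i, j, k, hij, hjk, p1, p2⟩ => h1 ?_,
          fun ⟨i, j, k, hij, hjk, p1, p2⟩ => h3 ?_⟩
  · exact ⟨σ⁻¹ k, σ⁻¹ i, σ⁻¹ j, p1, p2, by simp [hij, hjk, hij.trans hjk]⟩
  · exact ⟨σ⁻¹ j, σ⁻¹ k, σ⁻¹ i, p1, p2, by simp [hij, hjk, hij.trans hjk]⟩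
  · exact ⟨σ⁻¹ k, σ⁻¹ j, σ⁻¹ i, p1, p2, by simp [hij, hjk, hij.trans hjk]⟩

/-- If `σ` avoids 312 and 321 then values are at most one more than positions. -/
lemma avoid_upper {n : ℕ} (σ : Equiv.Perm (Fin n))
    (h2 : ¬ PContains312 σ) (h3 : ¬ PContains321 σ) (i : Fin n) :
    (σ i : ℕ) ≤ (i : ℕ) + 1 := by
  by_contra hcon
  push_neg at hcon
  set T : Finset (Fin n) := Finset.univ.filter (fun x => σ x < σ i) with hT
  have hTcard : T.card = (σ i : ℕ) := by
    have : T = (Finset.Iio (σ i)).map σ.symm.toEmbedding := by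
      ext x
      simp only [hT, Finset.mem_filter, Finset.mem_univ, true_and, Finset.mem_map,
        Finset.mem_Iio, Equiv.toEmbedding_apply]
      constructor
      · intro hx; exact ⟨σ x, hx, by simp⟩
      · rintro ⟨y, hy, rfl⟩; simpa using hy
    rw [this, Finset.card_map, Fin.card_Iio]
  have hsub : T.filter (fun x => ¬ i < x) ⊆ Finset.Iio i := by
    intro x hx
    simp only [hT, Finset.mem_filter, Finset.mem_univ, true_and, not_lt] at hx
    have hne : x ≠ i := fun h => by simp [h] at hx
    exact Finset.mem_Iio.2 (lt_of_le_of_ne hx.2 hne)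
  have hcard2 : 2 ≤ (T.filter (fun x => i < x)).card := by
    have h1 : (T.filter (fun x => i < x)).card + (T.filter (fun x => ¬ i < x)).card
        = (σ i : ℕ) := by
      rw [Finset.card_filter_add_card_filter_not, hTcard]
    have h2' : (T.filter (fun x => ¬ i < x)).card ≤ (i : ℕ) := by
      simpa [Fin.card_Iio] using Finset.card_le_card hsub
    omega
  obtain ⟨j, hj, k, hk, hjk⟩ := Finset.one_lt_card.1 hcard2
  simp only [hT, Finset.mem_filter, Finset.mem_univ, true_and] at hj hk
  rcases lt_trichotomy j k with hlt | heq | hgt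
  · rcases lt_trichotomy (σ j) (σ k) with hv | hv | hv
    · exact h2 ⟨i, j, k, hj.2, hlt, hv, hk.1⟩
    · exact hjk (σ.injective hv)
    · exact h3 ⟨i, j, k, hj.2, hlt, hv, hj.1⟩
  · exact hjk heq
  · rcases lt_trichotomy (σ k) (σ j) with hv | hv | hv
    · exact h2 ⟨i, k, j, hk.2, hgt, hv, hj.1⟩
    · exact hjk (σ.injective hv.symm)
    · exact h3 ⟨i, k, j, hk.2, hgt, hv, hk.1⟩

/-- "Displacement at most one" predicate. -/
def IsDisp {n : ℕ} (σ : Equiv.Perm (Fin n)) : Prop :=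
  ∀ i : Fin n, (σ i : ℕ) ≤ (i : ℕ) + 1 ∧ (i : ℕ) ≤ (σ i : ℕ) + 1

instance {n : ℕ} : DecidablePred (IsDisp (n := n)) := fun _ =>
  Fintype.decidableForallFintype

lemma avoid_iff_isDisp {n : ℕ} (σ : Equiv.Perm (Fin n)) :
    (¬ PContains231 σ ∧ ¬ PContains312 σ ∧ ¬ PContains321 σ) ↔ IsDisp σ := by
  constructor
  · intro h i
    obtain ⟨h1, h2, h3⟩ := avoid_inv σ h
    refine ⟨avoid_upper σ h.2.1 h.2.2 i, ?_⟩
    have := avoid_upper σ⁻¹ h2 h3 (σ i)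
    simpa using this
  · intro hd
    refine ⟨?_, ?_, ?_⟩
    · rintro ⟨i, j, k, hij, hjk, p1, p2⟩
      have di := hd i; have dj := hd j; have dk := hd k
      rw [Fin.lt_def] at hij hjk p1 p2
      omega
    · rintro ⟨i, j, k, hij, hjk, p1, p2⟩
      have di := hd i; have dj := hd j; have dk := hd k
      rw [Fin.lt_def] at hij hjk p1 p2
      omega
    · rintro ⟨i, j, k, hij, hjk, p1, p2⟩
      have di := hd i; have dj := hd j; have dk := hd k
      rw [Fin.lt_def] at hij hjk p1 p2
      omega

/-- The finset of displacement-at-most-one permutations. -/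
def DispF (n : ℕ) : Finset (Equiv.Perm (Fin n)) :=
  Finset.univ.filter IsDisp

lemma mem_DispF {n : ℕ} (σ : Equiv.Perm (Fin n)) : σ ∈ DispF n ↔ IsDisp σ := by
  simp [DispF]

lemma decomposeFin_fst {n : ℕ} (τ : Equiv.Perm (Fin (n + 1))) :
    (Equiv.Perm.decomposeFin τ).1 = τ 0 := by
  rcases h : Equiv.Perm.decomposeFin τ with ⟨p, e⟩
  have hs := Equiv.Perm.decomposeFin.symm_apply_apply τ
  rw [h] at hs
  rw [← hs, Equiv.Perm.decomposeFin_symm_apply_zero]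

lemma decomposeFin_snd_succ {n : ℕ} (τ : Equiv.Perm (Fin (n + 1))) (i : Fin n) :
    τ i.succ = Equiv.swap 0 (τ 0) (((Equiv.Perm.decomposeFin τ).2) i).succ := by
  rcases h : Equiv.Perm.decomposeFin τ with ⟨p, e⟩
  have hs := Equiv.Perm.decomposeFin.symm_apply_apply τ
  rw [h] at hs
  have hp : p = τ 0 := by rw [← hs, Equiv.Perm.decomposeFin_symm_apply_zero]
  conv_lhs => rw [← hs]
  rw [Equiv.Perm.decomposeFin_symm_apply_succ, hp]

lemma cardA (n : ℕ) :
    ((DispF (n + 1)).filter (fun σ => σ 0 = 0)).card = (DispF n).card := by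
  apply Finset.card_nbij' (fun τ => (Equiv.Perm.decomposeFin τ).2)
    (fun σ => Equiv.Perm.decomposeFin.symm (0, σ))
  · intro τ hτ
    rw [Finset.mem_coe, Finset.mem_filter, mem_DispF] at hτ
    obtain ⟨hd, h0⟩ := hτ
    rw [Finset.mem_coe, mem_DispF]
    intro i
    have hsucc : τ i.succ = (((Equiv.Perm.decomposeFin τ).2) i).succ := by
      rw [decomposeFin_snd_succ τ i, h0, Equiv.swap_self, Equiv.refl_apply]
    have := hd i.succ
    rw [hsucc] at this
    simp only [Fin.val_succ] at this ⊢
    omega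
  · intro σ hσ
    rw [Finset.mem_coe, mem_DispF] at hσ
    rw [Finset.mem_coe, Finset.mem_filter, mem_DispF]
    refine ⟨?_, Equiv.Perm.decomposeFin_symm_apply_zero 0 σ⟩
    intro j
    induction j using Fin.cases with
    | zero => rw [Equiv.Perm.decomposeFin_symm_apply_zero]; simp
    | succ i =>
      rw [Equiv.Perm.decomposeFin_symm_apply_succ, Equiv.swap_self, Equiv.refl_apply]
      have := hσ i
      simp only [Fin.val_succ]
      omega
  · intro τ hτ
    rw [Finset.mem_coe, Finset.mem_filter] at hτ
    beta_reduce
    have : ((0 : Fin (n + 1)), (Equiv.Perm.decomposeFin τ).2) =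
        Equiv.Perm.decomposeFin τ := by
      refine Prod.ext ?_ rfl
      rw [decomposeFin_fst, hτ.2]
    rw [this, Equiv.Perm.decomposeFin.symm_apply_apply]
  · intro σ _
    beta_reduce
    rw [Equiv.Perm.decomposeFin.apply_symm_apply]

lemma swap_fix_succ_succ {n : ℕ} (x : Fin n) :
    Equiv.swap (0 : Fin (n + 2)) 1 x.succ.succ = x.succ.succ := by
  apply Equiv.swap_apply_of_ne_of_ne
  · exact Fin.succ_ne_zero _
  · intro h
    rw [← Fin.succ_zero_eq_one] at h
    exact Fin.succ_ne_zero _ (Fin.succ_injective _ h)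

lemma cardB (n : ℕ) :
    ((DispF (n + 2)).filter (fun σ => σ 0 = 1)).card = (DispF n).card := by
  apply Finset.card_nbij'
    (fun τ => (Equiv.Perm.decomposeFin (Equiv.Perm.decomposeFin τ).2).2)
    (fun σ => Equiv.Perm.decomposeFin.symm (1, Equiv.Perm.decomposeFin.symm (0, σ)))
  · intro τ hτ
    beta_reduce
    rw [Finset.mem_coe, Finset.mem_filter, mem_DispF] at hτ
    obtain ⟨hd, h0⟩ := hτ
    set e : Equiv.Perm (Fin (n + 1)) := (Equiv.Perm.decomposeFin τ).2 with he
    have hτs : ∀ i : Fin (n + 1), τ i.succ = Equiv.swap 0 1 (e i).succ := by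
      intro i; rw [decomposeFin_snd_succ τ i, h0]
    -- τ 1 = 0
    have hτ1 : τ 1 = 0 := by
      have hm := hd (τ⁻¹ 0)
      rw [Equiv.Perm.coe_inv, Equiv.apply_symm_apply] at hm
      have hne : τ⁻¹ 0 ≠ 0 := by
        intro h
        have : τ 0 = 0 := by conv_lhs => rw [← h, Equiv.Perm.coe_inv, Equiv.apply_symm_apply]
        rw [h0] at this
        exact one_ne_zero this
      have hm' : ((τ⁻¹ 0 : Fin (n + 2)) : ℕ) ≤ 1 := by simpa using hm.2
      have hval : (τ⁻¹ 0 : Fin (n + 2)) = 1 := by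
        have h1 : ((τ⁻¹ 0 : Fin (n + 2)) : ℕ) ≠ 0 := fun h =>
          hne (Fin.ext (by simpa using h))
        apply Fin.ext
        simp only [Fin.val_one]
        omega
      rw [← hval, Equiv.Perm.coe_inv, Equiv.apply_symm_apply]
    -- e 0 = 0
    have he0 : e 0 = 0 := by
      have h1 := hτs 0
      rw [Fin.succ_zero_eq_one, hτ1] at h1
      have h2 : (e 0).succ = 1 := by
        have h3 := congrArg (Equiv.swap (0 : Fin (n + 2)) 1) h1
        rw [Equiv.swap_apply_left, Equiv.swap_apply_self] at h3; exact h3.symm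
      rw [← Fin.succ_zero_eq_one] at h2
      exact Fin.succ_injective _ h2
    set σ' : Equiv.Perm (Fin n) := (Equiv.Perm.decomposeFin e).2 with hσ'
    have hes : ∀ i : Fin n, e i.succ = (σ' i).succ := by
      intro i
      rw [decomposeFin_snd_succ e i, he0, Equiv.swap_self, Equiv.refl_apply]
    have hτss : ∀ i : Fin n, τ i.succ.succ = (σ' i).succ.succ := by
      intro i
      rw [hτs i.succ, hes i, swap_fix_succ_succ]
    rw [Finset.mem_coe, mem_DispF]
    intro i
    have := hd i.succ.succ
    rw [hτss i] at this
    simp only [Fin.val_succ] at this ⊢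
    omega
  · intro σ hσ
    rw [Finset.mem_coe, mem_DispF] at hσ
    rw [Finset.mem_coe, Finset.mem_filter, mem_DispF]
    refine ⟨?_, Equiv.Perm.decomposeFin_symm_apply_zero _ _⟩
    intro j
    induction j using Fin.cases with
    | zero =>
      rw [Equiv.Perm.decomposeFin_symm_apply_zero]
      simp
    | succ i =>
      rw [Equiv.Perm.decomposeFin_symm_apply_succ]
      induction i using Fin.cases with
      | zero =>
        rw [Equiv.Perm.decomposeFin_symm_apply_zero, Fin.succ_zero_eq_one,
          Equiv.swap_apply_right]
        simp
      | succ k =>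
        rw [Equiv.Perm.decomposeFin_symm_apply_succ, Equiv.swap_self, Equiv.refl_apply,
          swap_fix_succ_succ]
        have := hσ k
        simp only [Fin.val_succ]
        omega
  · intro τ hτ
    rw [Finset.mem_coe, Finset.mem_filter, mem_DispF] at hτ
    beta_reduce
    obtain ⟨hd, h0⟩ := hτ
    -- reuse facts: e 0 = 0 (as above)
    set e : Equiv.Perm (Fin (n + 1)) := (Equiv.Perm.decomposeFin τ).2 with he
    have hτs : ∀ i : Fin (n + 1), τ i.succ = Equiv.swap 0 1 (e i).succ := by
      intro i; rw [decomposeFin_snd_succ τ i, h0]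
    have hτ1 : τ 1 = 0 := by
      have hm := hd (τ⁻¹ 0)
      rw [Equiv.Perm.coe_inv, Equiv.apply_symm_apply] at hm
      have hne : τ⁻¹ 0 ≠ 0 := by
        intro h
        have : τ 0 = 0 := by conv_lhs => rw [← h, Equiv.Perm.coe_inv, Equiv.apply_symm_apply]
        rw [h0] at this
        exact one_ne_zero this
      have hm' : ((τ⁻¹ 0 : Fin (n + 2)) : ℕ) ≤ 1 := by simpa using hm.2
      have hval : (τ⁻¹ 0 : Fin (n + 2)) = 1 := by
        have h1 : ((τ⁻¹ 0 : Fin (n + 2)) : ℕ) ≠ 0 := fun h =>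
          hne (Fin.ext (by simpa using h))
        apply Fin.ext
        simp only [Fin.val_one]
        omega
      rw [← hval, Equiv.Perm.coe_inv, Equiv.apply_symm_apply]
    have he0 : e 0 = 0 := by
      have h1 := hτs 0
      rw [Fin.succ_zero_eq_one, hτ1] at h1
      have h2 : (e 0).succ = 1 := by
        have h3 := congrArg (Equiv.swap (0 : Fin (n + 2)) 1) h1
        rw [Equiv.swap_apply_left, Equiv.swap_apply_self] at h3; exact h3.symm
      rw [← Fin.succ_zero_eq_one] at h2
      exact Fin.succ_injective _ h2
    have hee : Equiv.Perm.decomposeFin.symm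
        ((0 : Fin (n + 1)), (Equiv.Perm.decomposeFin e).2) = e := by
      have : ((0 : Fin (n + 1)), (Equiv.Perm.decomposeFin e).2) =
          Equiv.Perm.decomposeFin e := by
        refine Prod.ext ?_ rfl
        rw [decomposeFin_fst, he0]
      rw [this, Equiv.Perm.decomposeFin.symm_apply_apply]
    rw [hee]
    have : ((1 : Fin (n + 2)), e) = Equiv.Perm.decomposeFin τ := by
      refine Prod.ext ?_ rfl
      rw [decomposeFin_fst, h0]
    rw [this, Equiv.Perm.decomposeFin.symm_apply_apply]
  · intro σ _
    beta_reduce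
    rw [Equiv.Perm.decomposeFin.apply_symm_apply, Equiv.Perm.decomposeFin.apply_symm_apply]

lemma card_DispF_rec (n : ℕ) :
    (DispF (n + 2)).card = (DispF (n + 1)).card + (DispF n).card := by
  have hsplit := Finset.card_filter_add_card_filter_not
    (s := DispF (n + 2)) (p := fun σ => σ 0 = 0)
  have hneg : (DispF (n + 2)).filter (fun σ => ¬ σ 0 = 0) =
      (DispF (n + 2)).filter (fun σ => σ 0 = 1) := by
    ext σ
    simp only [Finset.mem_filter, mem_DispF, and_congr_right_iff]
    intro hd
    have h0 := (hd 0).1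
    simp only [Fin.val_zero] at h0
    constructor
    · intro hne
      have hne' : ((σ 0 : Fin (n + 2)) : ℕ) ≠ 0 := fun h => hne (Fin.ext (by simpa using h))
      apply Fin.ext
      simp only [Fin.val_one]
      omega
    · intro h1 h2
      rw [h2] at h1
      exact one_ne_zero h1.symm
  rw [hneg, cardA, cardB] at hsplit
  omega

lemma card_DispF : ∀ n : ℕ, (DispF n).card = Nat.fib (n + 1)
  | 0 => by
    have h : ∀ σ ∈ (Finset.univ : Finset (Equiv.Perm (Fin 0))), IsDisp σ :=
      fun σ _ i => i.elim0
    rw [DispF, Finset.filter_true_of_mem h, Finset.card_univ, Fintype.card_perm]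
    simp
  | 1 => by
    have h : ∀ σ ∈ (Finset.univ : Finset (Equiv.Perm (Fin 1))), IsDisp σ := by
      intro σ _ i
      have : σ i = i := Subsingleton.elim _ _
      rw [this]
      omega
    rw [DispF, Finset.filter_true_of_mem h, Finset.card_univ, Fintype.card_perm]
    simp
  | (n + 2) => by
    rw [card_DispF_rec, card_DispF (n + 1), card_DispF n]
    have h := Nat.fib_add_two (n := n + 1)
    rw [show n + 1 + 2 = n + 2 + 1 from rfl] at h
    omega

/-- The number of permutations of length n avoiding 231, 312 and 321 is the (n+1)st
Fibonacci number (with F_1 = F_2 = 1). -/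
theorem avoid_231_312_321_fib (n : ℕ) :
    Set.ncard {σ : Equiv.Perm (Fin n) |
        ¬ PContains231 σ ∧ ¬ PContains312 σ ∧ ¬ PContains321 σ} = Nat.fib (n + 1) := by
  have hset : {σ : Equiv.Perm (Fin n) |
      ¬ PContains231 σ ∧ ¬ PContains312 σ ∧ ¬ PContains321 σ} = ↑(DispF n) := by
    ext σ
    simp only [Set.mem_setOf_eq, Finset.coe_filter, DispF, Finset.mem_univ, true_and,
      Finset.mem_coe, mem_DispF]
    exact avoid_iff_isDisp σ
  rw [hset, Set.ncard_coe_finset, card_DispF]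
end

section
/- An inversion sequence e of length n avoiding 120, 201, 1010 with exactly n-1 layers has a unique index i ≥ 2 such that e_i does not start a new layer, and necessarily e_m = m-1 for all m < i and either e_i = i-2 or e_i = i-3. -/
def IsInvSeq (e : List ℕ) : Prop := ∀ i < e.length, e.getD i 0 ≤ i

def IsLayeredDecomp (w : List ℕ) (L : List (List ℕ)) : Prop :=
  w = L.flatten ∧ (∀ t ∈ L, t ≠ [] ∧ List.Chain' (fun a b => b ≤ a) t) ∧
    List.Chain' (fun t t' => t.getLastD 0 < t'.headI ∧ t.headI ≤ t'.getLastD 0) L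

def IsLayered (w : List ℕ) : Prop := ∃ L, IsLayeredDecomp w L

def HasLayers (w : List ℕ) (k : ℕ) : Prop := ∃ L, IsLayeredDecomp w L ∧ L.length = k

lemma getD_cons_of_pos (a : ℕ) (l : List ℕ) {j : ℕ} (hj : 0 < j) :
    (a :: l).getD j 0 = l.getD (j-1) 0 := by
  obtain ⟨k, rfl⟩ : ∃ k, j = k + 1 := ⟨j - 1, by omega⟩
  simp

lemma key (w : List ℕ) : ∀ L, IsLayeredDecomp w L →
    (L.length ≤ w.length) ∧
    ((∃ j, 0 < j ∧ j < w.length ∧ w.getD j 0 ≤ w.getD (j-1) 0) → L.length + 1 ≤ w.length) ∧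
    ((∃ i j, 0 < i ∧ i < j ∧ j < w.length ∧ w.getD i 0 ≤ w.getD (i-1) 0 ∧
        w.getD j 0 ≤ w.getD (j-1) 0) → L.length + 2 ≤ w.length) ∧
    (L.length < w.length → ∃ i, 0 < i ∧ i < w.length ∧ w.getD i 0 ≤ w.getD (i-1) 0) := by
  induction w with
  | nil =>
    rintro L ⟨hflat, hlayers, -⟩
    cases L with
    | nil => simp
    | cons t L' =>
      exfalso
      have ht := (hlayers t (by simp)).1
      simp at hflat
      exact ht hflat.1
  | cons a w' ih =>
    rintro L ⟨hflat, hlayers, hchain⟩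
    cases L with
    | nil => simp at hflat
    | cons t L' =>
    cases t with
    | nil => exact absurd rfl (hlayers [] (by simp)).1
    | cons c t₀ =>
    simp only [List.flatten_cons, List.cons_append] at hflat
    injection hflat with hca hw'
    subst hca
    -- fact: if L' nonempty, head of flatten L' is headI of first layer and > getLastD t 0
    cases t₀ with
    | nil =>
      -- singleton first layer
      have hw'' : w' = L'.flatten := by simpa using hw'
      have hdec' : IsLayeredDecomp w' L' := by
        refine ⟨hw'', fun t ht => hlayers t (by simp [ht]), hchain.tail⟩
      obtain ⟨h0, h1, h2, h3⟩ := ih L' hdec'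
      have hno1 : ¬ ((a :: w').getD 1 0 ≤ (a :: w').getD 0 0) ∨ w' = [] := by
        cases L' with
        | nil => right; simpa using hw''
        | cons t' L'' =>
          left
          have ht' := (hlayers t' (by simp)).1
          have hrel := List.isChain_cons_cons.mp hchain |>.1
          cases t' with
          | nil => exact absurd rfl ht'
          | cons x t₁ =>
            have : w'.getD 0 0 = x := by
              rw [hw'']; simp [List.flatten_cons]
            simp only [List.getD_cons_succ, List.getD_cons_zero, this]
            simp [List.getLastD] at hrel
            omega
      constructor
      · simp; omega
      refine ⟨?_, ?_, ?_⟩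
      · rintro ⟨j, hj0, hjlen, hjd⟩
        have hj2 : 2 ≤ j := by
          rcases hno1 with h | h
          · by_contra hcon
            have : j = 1 := by omega
            subst this
            exact h hjd
          · subst h; simp at hjlen; omega
        have : L'.length + 1 ≤ w'.length := by
          apply h1
          refine ⟨j - 1, by omega, by simp at hjlen; omega, ?_⟩
          rw [getD_cons_of_pos _ _ (by omega), getD_cons_of_pos _ _ (by omega)] at hjd
          exact hjd
        simp; omega
      · rintro ⟨i, j, hi0, hij, hjlen, hid, hjd⟩
        have hi2 : 2 ≤ i := by
          rcases hno1 with h | h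
          · by_contra hcon
            have : i = 1 := by omega
            subst this
            exact h hid
          · subst h; simp at hjlen; omega
        have : L'.length + 2 ≤ w'.length := by
          apply h2
          refine ⟨i - 1, j - 1, by omega, by omega, by simp at hjlen; omega, ?_, ?_⟩
          · rw [getD_cons_of_pos _ _ (by omega), getD_cons_of_pos _ _ (by omega)] at hid
            exact hid
          · rw [getD_cons_of_pos _ _ (by omega), getD_cons_of_pos _ _ (by omega)] at hjd
            exact hjd
        simp; omega
      · intro hlt
        simp at hlt
        obtain ⟨i, hi0, hilen, hid⟩ := h3 (by omega)
        refine ⟨i + 1, by omega, by simp; omega, ?_⟩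
        rw [getD_cons_of_pos _ _ (by omega), getD_cons_of_pos _ _ (by omega)]
        simpa using hid
    | cons b t₁ =>
      -- first layer has ≥ 2 elements; a descent at 1
      have hba : b ≤ a := by
        have := (hlayers (a :: b :: t₁) (by simp)).2
        exact (List.isChain_cons_cons.mp this).1
      have hdec' : IsLayeredDecomp w' ((b :: t₁) :: L') := by
        refine ⟨by simpa using hw', ?_, ?_⟩
        · intro t ht
          simp at ht
          rcases ht with rfl | ht
          · refine ⟨by simp, ((hlayers (a :: b :: t₁) (by simp)).2).tail⟩
          · exact hlayers t (by simp [ht])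
        · cases L' with
          | nil => exact List.isChain_singleton _
          | cons t' L'' =>
            have hrel := List.isChain_cons_cons.mp hchain |>.1
            refine List.isChain_cons_cons.mpr ⟨?_, hchain.tail⟩
            simp only [List.getLastD_cons, List.headI] at hrel ⊢
            exact ⟨hrel.1, le_trans hba hrel.2⟩
      obtain ⟨h0, h1, h2, h3⟩ := ih ((b :: t₁) :: L') hdec'
      simp only [List.length_cons] at h0 h1 h2 h3 ⊢
      constructor
      · omega
      refine ⟨?_, ?_, ?_⟩
      · intro _; omega
      · rintro ⟨i, j, hi0, hij, hjlen, hid, hjd⟩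
        rcases Nat.lt_or_ge i 2 with h | h
        · -- i = 1, use One on j
          have : L'.length + 1 + 1 ≤ w'.length := by
            apply h1
            refine ⟨j - 1, by omega, by omega, ?_⟩
            rw [getD_cons_of_pos _ _ (by omega), getD_cons_of_pos _ _ (by omega)] at hjd
            exact hjd
          omega
        · have : L'.length + 1 + 2 ≤ w'.length := by
            apply h2
            refine ⟨i - 1, j - 1, by omega, by omega, by omega, ?_, ?_⟩
            · rw [getD_cons_of_pos _ _ (by omega), getD_cons_of_pos _ _ (by omega)] at hid
              exact hid
            · rw [getD_cons_of_pos _ _ (by omega), getD_cons_of_pos _ _ (by omega)] at hjd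
              exact hjd
          omega
      · intro _
        refine ⟨1, by omega, ?_, ?_⟩
        · subst hw'; simp
        · subst hw'; simpa using hba

/-- In a layered word, the (1-indexed) entry e_i starts a new layer iff i = 1 or
e_i > e_{i-1}; so e_i fails to start a new layer iff e_i ≤ e_{i-1}.  An inversion
sequence e of length n avoiding 120, 201, 1010 with exactly n-1 layers has a unique index
i ≥ 2 with e_i ≤ e_{i-1}; moreover for this index, e_m = m-1 for all m < i, and either
e_i = i-2 or e_i = i-3.  (Entries are accessed 1-indexed via e.getD (i-1) 0.) -/
theorem unique_non_layer_start (e : List ℕ) (hn : 1 ≤ e.length) (hinv : IsInvSeq e)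
    (h120 : ¬ Contains120 e) (h201 : ¬ Contains201 e) (h1010 : ¬ Contains1010 e)
    (hlay : HasLayers e (e.length - 1)) :
    (∃! i : ℕ, 2 ≤ i ∧ i ≤ e.length ∧ e.getD (i - 1) 0 ≤ e.getD (i - 2) 0) ∧
    ∀ i : ℕ, 2 ≤ i → i ≤ e.length → e.getD (i - 1) 0 ≤ e.getD (i - 2) 0 →
      (∀ m : ℕ, 1 ≤ m → m < i → e.getD (m - 1) 0 = m - 1) ∧
      (e.getD (i - 1) 0 = i - 2 ∨ e.getD (i - 1) 0 = i - 3) := by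
  obtain ⟨L, hdec, hlen⟩ := hlay
  obtain ⟨h0, h1, h2, h3⟩ := key e L hdec
  have huniqpos : ∀ p q, 0 < p → p < q → q < e.length →
      e.getD p 0 ≤ e.getD (p-1) 0 → e.getD q 0 ≤ e.getD (q-1) 0 → False := by
    intro p q hp hpq hq hpd hqd
    have := h2 ⟨p, q, hp, hpq, hq, hpd, hqd⟩
    omega
  obtain ⟨j0, hj00, hj0n, hj0d⟩ := h3 (by omega)
  constructor
  · refine ⟨j0 + 1, ⟨by omega, by omega, ?_⟩, ?_⟩
    · have e1 : j0 + 1 - 1 = j0 := by omega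
      have e2 : j0 + 1 - 2 = j0 - 1 := by omega
      rw [e1, e2]; exact hj0d
    · rintro y ⟨hy2, hyn, hyd⟩
      have hyd' : e.getD (y-1) 0 ≤ e.getD ((y-1)-1) 0 := by
        have : (y-1) - 1 = y - 2 := by omega
        rw [this]; exact hyd
      by_contra hne
      rcases lt_trichotomy (y-1) j0 with h | h | h
      · exact huniqpos (y-1) j0 (by omega) h hj0n hyd' hj0d
      · omega
      · exact huniqpos j0 (y-1) (by omega) h (by omega) hj0d hyd'
  · intro i hi2 hin hid
    have hid' : e.getD (i-1) 0 ≤ e.getD ((i-1)-1) 0 := by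
      have : (i-1) - 1 = i - 2 := by omega
      rw [this]; exact hid
    have A : ∀ k, k < i - 1 → e.getD k 0 = k := by
      intro k
      induction k using Nat.strong_induction_on with
      | _ k ihk =>
        intro hk
        have hle : e.getD k 0 ≤ k := hinv k (by omega)
        rcases Nat.eq_zero_or_pos k with rfl | hk0
        · omega
        · have hprev : e.getD (k-1) 0 = k - 1 := ihk (k-1) (by omega) (by omega)
          by_contra hne
          have hdesc : e.getD k 0 ≤ e.getD (k-1) 0 := by omega
          exact huniqpos k (i-1) hk0 (by omega) (by omega) hdesc hid'
    have hv1 : e.getD (i-2) 0 = i - 2 := A (i-2) (by omega)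
    constructor
    · intro m hm1 hmi
      exact A (m-1) (by omega)
    · have hge : i < 4 ∨ i - 3 ≤ e.getD (i-1) 0 := by
        rcases Nat.lt_or_ge i 4 with h4 | h4
        · exact Or.inl h4
        · right
          by_contra hcon
          push_neg at hcon
          have hv2 : e.getD (i-3) 0 = i - 3 := A (i-3) (by omega)
          exact h120 ⟨i-3, i-2, i-1, by omega, by omega, by omega, by omega, by omega⟩
      omega
end
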